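/- Let g : J → (0,∞) be geometrically convex on an interval J ⊂ (0,∞) and let a, b ∈ J. Then the function f(t) := g(a^(1-t) b^t) / (g(a)^(1-t) g(b)^t) is log-convex on [0,1] (it satisfies midpoint log-convexity f((s+t)/2) ≤ √(f(s)f(t))). -/

import Mathlib

open Real Set

lemma geom_mem (J : Set ℝ) (hJ : J ⊆ Set.Ioi (0 : ℝ)) (hJc : Convex ℝ J)
    (a b : ℝ) (ha : a ∈ J) (hb : b ∈ J) (s : ℝ) (hs0 : 0 ≤ s) (hs1 : s ≤ 1) :
    a ^ (1 - s) * b ^ s ∈ J := by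
  have ha0 : 0 < a := hJ ha
  have hb0 : 0 < b := hJ hb
  have hmin : 0 < min a b := lt_min ha0 hb0
  have hmax : 0 < max a b := lt_of_lt_of_le ha0 (le_max_left a b)
  have h1s : 0 ≤ 1 - s := by linarith
  have hlow : min a b ≤ a ^ (1 - s) * b ^ s := by
    calc min a b = min a b ^ (1 - s) * min a b ^ s := by
          rw [← Real.rpow_add hmin]; simp
      _ ≤ a ^ (1 - s) * b ^ s := by
          apply mul_le_mul
          · exact Real.rpow_le_rpow hmin.le (min_le_left a b) h1s
          · exact Real.rpow_le_rpow hmin.le (min_le_right a b) hs0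
          all_goals positivity
  have hhigh : a ^ (1 - s) * b ^ s ≤ max a b := by
    calc a ^ (1 - s) * b ^ s ≤ max a b ^ (1 - s) * max a b ^ s := by
          apply mul_le_mul
          · exact Real.rpow_le_rpow ha0.le (le_max_left a b) h1s
          · exact Real.rpow_le_rpow hb0.le (le_max_right a b) hs0
          all_goals positivity
      _ = max a b := by rw [← Real.rpow_add hmax]; simp
  have hoc := hJc.ordConnected
  rcases le_total a b with h | h
  · exact hoc.out ha hb ⟨by simpa [min_eq_left h] using hlow,
      by simpa [max_eq_right h] using hhigh⟩
  · exact hoc.out hb ha ⟨by simpa [min_eq_right h] using hlow,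
      by simpa [max_eq_left h] using hhigh⟩

theorem stmt_10 (J : Set ℝ) (hJ : J ⊆ Set.Ioi (0 : ℝ)) (hJc : Convex ℝ J)
    (g : ℝ → ℝ) (hpos : ∀ x ∈ J, 0 < g x)
    (hgc : ∀ x ∈ J, ∀ y ∈ J, ∀ l : ℝ, 0 ≤ l → l ≤ 1 →
      g (x ^ (1 - l) * y ^ l) ≤ g x ^ (1 - l) * g y ^ l)
    (a b : ℝ) (ha : a ∈ J) (hb : b ∈ J) :
    ∀ s ∈ Set.Icc (0 : ℝ) 1, ∀ t ∈ Set.Icc (0 : ℝ) 1,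
      (fun u : ℝ => g (a ^ (1 - u) * b ^ u) / (g a ^ (1 - u) * g b ^ u)) ((s + t) / 2) ≤
        Real.sqrt ((fun u : ℝ => g (a ^ (1 - u) * b ^ u) / (g a ^ (1 - u) * g b ^ u)) s *
          (fun u : ℝ => g (a ^ (1 - u) * b ^ u) / (g a ^ (1 - u) * g b ^ u)) t) := by
  rintro s ⟨hs0, hs1⟩ t ⟨ht0, ht1⟩
  simp only
  have ha0 : 0 < a := hJ ha
  have hb0 : 0 < b := hJ hb
  have hga : 0 < g a := hpos a ha
  have hgb : 0 < g b := hpos b hb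
  set x := a ^ (1 - s) * b ^ s with hxdef
  set y := a ^ (1 - t) * b ^ t with hydef
  have hx : x ∈ J := geom_mem J hJ hJc a b ha hb s hs0 hs1
  have hy : y ∈ J := geom_mem J hJ hJc a b ha hb t ht0 ht1
  have hgx : 0 < g x := hpos x hx
  have hgy : 0 < g y := hpos y hy
  set m := (s + t) / 2 with hmdef
  -- key identity for the arguments
  have harg : x ^ (1 - (1/2 : ℝ)) * y ^ ((1/2 : ℝ)) = a ^ (1 - m) * b ^ m := by
    rw [hxdef, hydef, Real.mul_rpow (by positivity) (by positivity),
      Real.mul_rpow (by positivity) (by positivity),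
      ← Real.rpow_mul ha0.le, ← Real.rpow_mul hb0.le,
      ← Real.rpow_mul ha0.le, ← Real.rpow_mul hb0.le]
    rw [show a ^ ((1 - s) * (1 - 1/2)) * b ^ (s * (1 - 1/2)) *
        (a ^ ((1 - t) * (1/2)) * b ^ (t * (1/2))) =
        a ^ ((1 - s) * (1 - 1/2)) * a ^ ((1 - t) * (1/2)) *
        (b ^ (s * (1 - 1/2)) * b ^ (t * (1/2))) by ring,
      ← Real.rpow_add ha0, ← Real.rpow_add hb0]
    congr 1 <;> [skip; congr 1] <;> rw [hmdef] <;> ring_nf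
  -- key identity for the denominators
  have hden : (g a ^ (1 - s) * g b ^ s) * (g a ^ (1 - t) * g b ^ t) =
      (g a ^ (1 - m) * g b ^ m) ^ 2 := by
    rw [show (g a ^ (1 - s) * g b ^ s) * (g a ^ (1 - t) * g b ^ t) =
        (g a ^ (1 - s) * g a ^ (1 - t)) * (g b ^ s * g b ^ t) by ring,
      ← Real.rpow_add hga, ← Real.rpow_add hgb, sq,
      show (g a ^ (1 - m) * g b ^ m) * (g a ^ (1 - m) * g b ^ m) =
        (g a ^ (1 - m) * g a ^ (1 - m)) * (g b ^ m * g b ^ m) by ring,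
      ← Real.rpow_add hga, ← Real.rpow_add hgb]
    congr 1 <;> congr 1 <;> ring
  have hkey : g (a ^ (1 - m) * b ^ m) ≤ Real.sqrt (g x * g y) := by
    rw [← harg, Real.sqrt_eq_rpow, Real.mul_rpow hgx.le hgy.le]
    have := hgc x hx y hy (1/2) (by norm_num) (by norm_num)
    calc g (x ^ (1 - (1/2:ℝ)) * y ^ ((1/2:ℝ))) ≤ g x ^ (1 - (1/2:ℝ)) * g y ^ ((1/2:ℝ)) := this
      _ = g x ^ ((1/2:ℝ)) * g y ^ ((1/2:ℝ)) := by norm_num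
  have hD : 0 < g a ^ (1 - m) * g b ^ m := by positivity
  have hDs : 0 < g a ^ (1 - s) * g b ^ s := by positivity
  have hDt : 0 < g a ^ (1 - t) * g b ^ t := by positivity
  rw [show g x / (g a ^ (1 - s) * g b ^ s) * (g y / (g a ^ (1 - t) * g b ^ t)) =
      (g x * g y) / ((g a ^ (1 - s) * g b ^ s) * (g a ^ (1 - t) * g b ^ t)) by ring,
    hden, Real.sqrt_div' _ ?_, Real.sqrt_sq hD.le]
  · exact div_le_div_of_nonneg_right hkey hD.le |>.trans_eq rfl
  · positivity
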